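/- For every real s > 1 the series S(s) = Σ_{k=1}^{∞} (2k+1)·(k(k+1))^{−s} converges, and lim_{s→1⁺} (S(s) − 1/(s−1)) = 2γ − 1, where γ is the Euler–Mascheroni constant. -/

import Mathlib

open Real Filter Topology

/-- The spectral zeta function of the round unit sphere:
`S(s) = Σ_{k ≥ 1} (2k+1)(k(k+1))^{−s}` (indexed here by `k+1`, `k : ℕ`). -/
noncomputable def S (s : ℝ) : ℝ :=
  ∑' k : ℕ, (2 * ((k : ℝ) + 1) + 1) * (((k : ℝ) + 1) * (((k : ℝ) + 1) + 1)) ^ (-s)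

/-- Bernoulli's inequality for nonpositive exponents. -/
private lemma bernoulli_neg {t p : ℝ} (ht : 0 ≤ t) (hp : p ≤ 0) :
    1 + p * t ≤ (1 + t) ^ p := by
  have h1 : (0:ℝ) < 1 + t := by linarith
  rw [Real.rpow_def_of_pos h1]
  have hl : Real.log (1 + t) ≤ t := by
    have := Real.log_le_sub_one_of_pos h1; linarith
  have hl0 : 0 ≤ Real.log (1 + t) := Real.log_nonneg (by linarith)
  have h2 : p * t ≤ p * Real.log (1 + t) := by nlinarith
  have h3 : p * Real.log (1 + t) + 1 ≤ Real.exp (p * Real.log (1 + t)) :=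
    Real.add_one_le_exp _
  rw [mul_comm (Real.log (1 + t)) p]
  linarith

/-- Mean-value type bound for differences of rpow with nonpositive exponent. -/
private lemma rpow_sub_rpow_le {x c : ℝ} (hx : 1 ≤ x) (hc : c ≤ 0) :
    x ^ c - (x + 1) ^ c ≤ (-c) * x ^ (c - 1) := by
  have hx0 : (0:ℝ) < x := by linarith
  have hinv : (0:ℝ) ≤ 1 / x := by positivity
  have hxc : (0:ℝ) ≤ x ^ c := Real.rpow_nonneg hx0.le _
  have h1 : (x + 1) ^ c = x ^ c * (1 + 1/x) ^ c := by
    rw [← Real.mul_rpow hx0.le (by positivity)]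
    congr 1; field_simp
  have h2 : x ^ c * (1 + c * (1/x)) ≤ (x + 1) ^ c := by
    rw [h1]
    exact mul_le_mul_of_nonneg_left (bernoulli_neg hinv hc) hxc
  have h3 : x ^ (c - 1) = x ^ c * (1/x) := by
    rw [Real.rpow_sub hx0, Real.rpow_one]; ring
  rw [h3]; nlinarith

private lemma summable_shift (t : ℝ) (ht : 1 < t) :
    Summable (fun n : ℕ => ((n : ℝ) + 1) ^ (-t)) := by
  have h : Summable (fun n : ℕ => ((n : ℝ)) ^ (-t)) :=
    Real.summable_nat_rpow.mpr (by linarith)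
  have := (summable_nat_add_iff 1).mpr h
  refine this.congr fun n => ?_
  push_cast
  rfl

private lemma term_sum_le {s : ℝ} (hs : 1 < s) (k : ℕ) :
    (2 * ((k : ℝ) + 1) + 1) * (((k : ℝ) + 1) * (((k : ℝ) + 1) + 1)) ^ (-s)
      ≤ 3 * ((k : ℝ) + 1) ^ (-(2 * s - 1)) := by
  set n : ℝ := (k : ℝ) + 1 with hn
  have hn1 : 1 ≤ n := by have := Nat.cast_nonneg (α:=ℝ) k; linarith
  have hn0 : (0:ℝ) < n := by linarith
  have h1 : (n * (n + 1)) ^ (-s) ≤ (n * n) ^ (-s) :=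
    Real.rpow_le_rpow_of_nonpos (by positivity) (by nlinarith) (by linarith)
  have h2 : (n * n) ^ (-s) = n ^ (-s) * n ^ (-s) := Real.mul_rpow hn0.le hn0.le
  have h3 : n * (n ^ (-s) * n ^ (-s)) = n ^ (-(2 * s - 1)) := by
    rw [← Real.rpow_add hn0]
    rw [show n * n ^ (-s + -s) = n ^ (1:ℝ) * n ^ (-s + -s) by rw [Real.rpow_one]]
    rw [← Real.rpow_add hn0]
    congr 1; ring
  have hp : (0:ℝ) ≤ (n * (n + 1)) ^ (-s) := Real.rpow_nonneg (by positivity) _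
  calc (2 * n + 1) * (n * (n + 1)) ^ (-s) ≤ (3 * n) * ((n * n) ^ (-s)) := by
        apply mul_le_mul (by linarith) h1 hp (by linarith)
    _ = 3 * (n * (n ^ (-s) * n ^ (-s))) := by rw [h2]; ring
    _ = 3 * n ^ (-(2 * s - 1)) := by rw [h3]

private lemma summable_term {s : ℝ} (hs : 1 < s) :
    Summable (fun k : ℕ =>
      (2 * ((k : ℝ) + 1) + 1) * (((k : ℝ) + 1) * (((k : ℝ) + 1) + 1)) ^ (-s)) := by
  refine Summable.of_nonneg_of_le (fun k => by positivity) (fun k => term_sum_le hs k) ?_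
  exact (summable_shift (2 * s - 1) (by linarith)).mul_left 3
private noncomputable def aterm (s : ℝ) (k : ℕ) : ℝ :=
  (2 * ((k : ℝ) + 1) + 1) * (((k : ℝ) + 1) * (((k : ℝ) + 1) + 1)) ^ (-s)
    - 2 * ((k : ℝ) + 1) ^ (-(2 * s - 1))

private lemma aterm_eq (s : ℝ) (k : ℕ) :
    aterm s k = ((k:ℝ)+1) ^ (-s) * ((((k:ℝ)+1)+1) ^ (1-s) - ((k:ℝ)+1) ^ (1-s))
      + ((k:ℝ)+1) ^ (1-s) * ((((k:ℝ)+1)+1) ^ (-s) - ((k:ℝ)+1) ^ (-s)) := by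
  set n : ℝ := (k : ℝ) + 1 with hn
  have hn0 : (0:ℝ) < n := by positivity
  have hm0 : (0:ℝ) < n + 1 := by positivity
  have h1 : (n * (n + 1)) ^ (-s) = n ^ (-s) * (n+1) ^ (-s) := Real.mul_rpow hn0.le hm0.le
  have h2 : n * n ^ (-s) = n ^ (1-s) := by
    rw [show (1-s) = 1 + (-s) by ring, Real.rpow_add hn0, Real.rpow_one]
  have h3 : (n+1) * (n+1) ^ (-s) = (n+1) ^ (1-s) := by
    rw [show (1-s) = 1 + (-s) by ring, Real.rpow_add hm0, Real.rpow_one]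
  have h4 : n ^ (-(2*s-1)) = n ^ (-s) * n ^ (1-s) := by
    rw [← Real.rpow_add hn0]; congr 1; ring
  show (2 * n + 1) * (n * (n + 1)) ^ (-s) - 2 * n ^ (-(2 * s - 1)) = _
  rw [h1, h4]
  have expand : (2 * n + 1) * (n ^ (-s) * (n+1) ^ (-s))
      = (n * n ^ (-s)) * (n+1) ^ (-s) + ((n+1) * (n+1)^(-s)) * n ^ (-s) := by ring
  rw [expand, h2, h3]; ring

private lemma aterm_bound {s : ℝ} (hs : s ∈ Set.Ioc (1:ℝ) (3/2)) (k : ℕ) :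
    ‖aterm s k‖ ≤ 2 / ((k:ℝ)+1)^2 := by
  obtain ⟨hs1, hs2⟩ := hs
  set n : ℝ := (k : ℝ) + 1 with hn
  have hn1 : 1 ≤ n := by have := Nat.cast_nonneg (α:=ℝ) k; linarith
  have hn0 : (0:ℝ) < n := by linarith
  have hinv : (0:ℝ) ≤ n⁻¹ := by positivity
  -- A
  have hA0 : 0 ≤ n ^ (1-s) - (n+1) ^ (1-s) :=
    sub_nonneg.mpr (Real.rpow_le_rpow_of_nonpos hn0 (by linarith) (by linarith))
  have hA1 : n ^ (1-s) - (n+1) ^ (1-s) ≤ (s-1) * n ^ (-s) := by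
    have := rpow_sub_rpow_le hn1 (show (1-s) ≤ 0 by linarith)
    rw [show (1-s) - 1 = -s by ring] at this
    calc n ^ (1-s) - (n+1) ^ (1-s) ≤ (-(1-s)) * n ^ (-s) := this
      _ = (s-1) * n ^ (-s) := by ring
  -- B
  have hB0 : 0 ≤ n ^ (-s) - (n+1) ^ (-s) :=
    sub_nonneg.mpr (Real.rpow_le_rpow_of_nonpos hn0 (by linarith) (by linarith))
  have hB1 : n ^ (-s) - (n+1) ^ (-s) ≤ s * n ^ (-s-1) := by
    have := rpow_sub_rpow_le hn1 (show (-s) ≤ 0 by linarith)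
    calc n ^ (-s) - (n+1) ^ (-s) ≤ (-(-s)) * n ^ (-s-1) := this
      _ = s * n ^ (-s-1) := by ring
  -- elementary comparisons
  have e1 : n ^ (-s) ≤ n⁻¹ := by
    have := Real.rpow_le_rpow_of_exponent_le hn1 (show -s ≤ -1 by linarith)
    rwa [Real.rpow_neg_one] at this
  have e2 : n ^ (1-s) ≤ 1 := by
    have := Real.rpow_le_rpow_of_exponent_le hn1 (show 1-s ≤ 0 by linarith)
    rwa [Real.rpow_zero] at this
  have e3 : n ^ (-s-1) = n ^ (-s) * n⁻¹ := by
    rw [show (-s-1) = -s + -1 by ring, Real.rpow_add hn0, Real.rpow_neg_one]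
  have p1 : (0:ℝ) ≤ n ^ (-s) := Real.rpow_nonneg hn0.le _
  have p2 : (0:ℝ) ≤ n ^ (1-s) := Real.rpow_nonneg hn0.le _
  -- rewrite aterm and take abs
  have habs : ‖aterm s k‖
      = n ^ (-s) * (n ^ (1-s) - (n+1) ^ (1-s)) + n ^ (1-s) * (n ^ (-s) - (n+1) ^ (-s)) := by
    rw [Real.norm_eq_abs, aterm_eq]
    rw [show ((k:ℝ)+1) ^ (-s) * ((((k:ℝ)+1)+1) ^ (1-s) - ((k:ℝ)+1) ^ (1-s))
        + ((k:ℝ)+1) ^ (1-s) * ((((k:ℝ)+1)+1) ^ (-s) - ((k:ℝ)+1) ^ (-s))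
        = -(n ^ (-s) * (n ^ (1-s) - (n+1) ^ (1-s)) + n ^ (1-s) * (n ^ (-s) - (n+1) ^ (-s)))
      by rw [hn]; ring]
    rw [abs_neg, abs_of_nonneg]
    positivity
  rw [habs]
  have t1 : n ^ (-s) * (n ^ (1-s) - (n+1) ^ (1-s)) ≤ n⁻¹ * ((1/2) * n⁻¹) := by
    have s1 : (s-1) * n ^ (-s) ≤ (1/2) * n⁻¹ :=
      mul_le_mul (by linarith) e1 p1 (by norm_num)
    calc n ^ (-s) * (n ^ (1-s) - (n+1) ^ (1-s)) ≤ n⁻¹ * ((s-1) * n ^ (-s)) :=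
          mul_le_mul e1 hA1 hA0 hinv
      _ ≤ n⁻¹ * ((1/2) * n⁻¹) := by
          exact mul_le_mul_of_nonneg_left s1 hinv
  have t2 : n ^ (1-s) * (n ^ (-s) - (n+1) ^ (-s)) ≤ 1 * ((3/2) * (n⁻¹ * n⁻¹)) := by
    have s2 : s * n ^ (-s-1) ≤ (3/2) * (n⁻¹ * n⁻¹) := by
      rw [e3]
      exact mul_le_mul (by linarith) (mul_le_mul_of_nonneg_right e1 hinv)
        (by positivity) (by norm_num)
    calc n ^ (1-s) * (n ^ (-s) - (n+1) ^ (-s)) ≤ 1 * (s * n ^ (-s-1)) :=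
          mul_le_mul e2 hB1 hB0 zero_le_one
      _ ≤ 1 * ((3/2) * (n⁻¹ * n⁻¹)) := by
          exact mul_le_mul_of_nonneg_left s2 zero_le_one
  have final : 2 / n^2 = 2 * (n⁻¹ * n⁻¹) := by
    rw [pow_two]; field_simp
  rw [show (2:ℝ) / ((k:ℝ)+1)^2 = 2 / n^2 from rfl, final]
  nlinarith [t1, t2]
private lemma aterm_one (k : ℕ) :
    aterm 1 k = -(1 / (((k:ℝ)+1) * (((k:ℝ)+1)+1))) := by
  set n : ℝ := (k : ℝ) + 1 with hn
  have hn0 : (0:ℝ) < n := by positivity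
  have hm0 : (0:ℝ) < n + 1 := by positivity
  show (2 * n + 1) * (n * (n + 1)) ^ (-(1:ℝ)) - 2 * n ^ (-(2 * (1:ℝ) - 1)) = -(1 / (n * (n+1)))
  rw [show -(2 * (1:ℝ) - 1) = (-1 : ℝ) by norm_num, Real.rpow_neg_one, Real.rpow_neg_one]
  field_simp
  ring

private lemma hasSum_aterm_one : HasSum (fun k => aterm 1 k) (-1) := by
  have key : HasSum (fun k : ℕ => 1/((k:ℝ)+1) - 1/((k:ℝ)+2)) 1 := by
    rw [hasSum_iff_tendsto_nat_of_nonneg]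
    · have heq : ∀ N : ℕ, ∑ i ∈ Finset.range N, (1/((i:ℝ)+1) - 1/((i:ℝ)+2))
          = 1 - 1/((N:ℝ)+1) := by
        intro N
        have h := Finset.sum_range_sub' (fun i : ℕ => 1/((i:ℝ)+1)) N
        calc ∑ i ∈ Finset.range N, (1/((i:ℝ)+1) - 1/((i:ℝ)+2))
            = ∑ i ∈ Finset.range N, (1/((i:ℝ)+1) - 1/(((i+1:ℕ):ℝ)+1)) := by
              apply Finset.sum_congr rfl; intro i _; push_cast; ring_nf
          _ = 1/(((0:ℕ):ℝ)+1) - 1/((N:ℝ)+1) := h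
          _ = 1 - 1/((N:ℝ)+1) := by norm_num
      simp only [heq]
      have h0 : Tendsto (fun N : ℕ => 1/((N:ℝ)+1)) atTop (𝓝 0) :=
        tendsto_one_div_add_atTop_nhds_zero_nat
      have := (tendsto_const_nhds (x := (1:ℝ)) (f := atTop)).sub h0
      simpa using this
    · intro i
      have h1 : (0:ℝ) < (i:ℝ)+1 := by positivity
      have h2 : (0:ℝ) < (i:ℝ)+2 := by positivity
      rw [sub_nonneg, div_le_div_iff₀ h2 h1]
      linarith
  have heq : (fun k : ℕ => aterm 1 k) = fun k : ℕ => -(1/((k:ℝ)+1) - 1/((k:ℝ)+2)) := by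
    funext k
    rw [aterm_one]
    have h1 : (0:ℝ) < (k:ℝ)+1 := by positivity
    have h2 : (0:ℝ) < ((k:ℝ)+1)+1 := by positivity
    rw [neg_inj, show (k:ℝ)+2 = ((k:ℝ)+1)+1 by ring]
    field_simp
    ring
  rw [heq]
  simpa using key.neg
private lemma aterm_tendsto (k : ℕ) :
    Tendsto (fun s : ℝ => aterm s k) (𝓝[>] 1) (𝓝 (aterm 1 k)) := by
  have hn0 : ((k:ℝ)+1) ≠ 0 := by positivity
  have hm0 : (((k:ℝ)+1) * (((k:ℝ)+1)+1)) ≠ 0 := by positivity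
  have c1 : ContinuousAt (fun s : ℝ => (((k:ℝ)+1) * (((k:ℝ)+1)+1)) ^ (-s)) 1 :=
    (Real.continuousAt_const_rpow hm0).comp (continuous_neg.continuousAt)
  have c2 : ContinuousAt (fun s : ℝ => ((k:ℝ)+1) ^ (-(2*s-1))) 1 :=
    (Real.continuousAt_const_rpow hn0).comp
      (((continuous_const.mul continuous_id).sub continuous_const).neg.continuousAt)
  have : ContinuousAt (fun s : ℝ => aterm s k) 1 :=
    ((continuousAt_const.mul c1).sub (continuousAt_const.mul c2))
  exact this.tendsto.mono_left nhdsWithin_le_nhds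

private lemma tendsto_tsum_aterm :
    Tendsto (fun s : ℝ => ∑' k, aterm s k) (𝓝[>] 1) (𝓝 (-1)) := by
  have hb : Summable (fun k : ℕ => 2 / ((k:ℝ)+1)^2) := by
    have h : Summable (fun k : ℕ => ((k:ℝ)+1) ^ (-(2:ℝ))) := summable_shift 2 one_lt_two
    refine (h.mul_left 2).congr fun k => ?_
    have : ((k:ℝ)+1) ^ (-(2:ℝ)) = (((k:ℝ)+1)^2)⁻¹ := by
      rw [Real.rpow_neg (by positivity), Real.rpow_two]
    rw [this]; ring
  have := tendsto_tsum_of_dominated_convergence (f := fun s k => aterm s k)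
    (g := fun k => aterm 1 k) (bound := fun k : ℕ => 2 / ((k:ℝ)+1)^2) hb
    (fun k => aterm_tendsto k) ?_
  · rw [hasSum_aterm_one.tsum_eq] at this
    exact this
  · filter_upwards [Ioc_mem_nhdsGT (show (1:ℝ) < 3/2 by norm_num)] with s hs k
    exact aterm_bound hs k

private lemma zeta_real_limit :
    Tendsto (fun t : ℝ => (∑' n : ℕ, ((n:ℝ)+1) ^ (-t)) - 1/(t-1)) (𝓝[>] 1)
      (𝓝 Real.eulerMascheroniConstant) := by
  have h := ZetaAsymptotics.tendsto_riemannZeta_sub_one_div_nhds_right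
  have h2 := (Complex.continuous_re.tendsto _).comp h
  simp only [Complex.ofReal_re] at h2
  apply h2.congr'
  filter_upwards [self_mem_nhdsWithin] with s hs
  have hs1 : (1:ℝ) < s := hs
  simp only [Function.comp_apply]
  rw [zeta_eq_tsum_one_div_nat_add_one_cpow (by simpa using hs1)]
  have key : (∑' n : ℕ, 1 / ((n:ℂ) + 1) ^ (s:ℂ))
      = ((∑' n : ℕ, ((n:ℝ)+1) ^ (-s) : ℝ) : ℂ) := by
    rw [Complex.ofReal_tsum]
    congr 1
    funext n
    rw [Real.rpow_neg (by positivity), Complex.ofReal_inv,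
      Complex.ofReal_cpow (by positivity)]
    push_cast
    rw [one_div]
  rw [key, show (1:ℂ)/((s:ℂ)-1) = (((1/(s-1) : ℝ)):ℂ) by push_cast; ring,
    ← Complex.ofReal_sub, Complex.ofReal_re]

private lemma tendsto_two_mul_sub_one :
    Tendsto (fun s : ℝ => 2 * s - 1) (𝓝[>] (1:ℝ)) (𝓝[>] (1:ℝ)) := by
  apply tendsto_nhdsWithin_of_tendsto_nhds_of_eventually_within
  · have h : Tendsto (fun s : ℝ => 2 * s - 1) (𝓝 (1:ℝ)) (𝓝 (2 * 1 - 1)) :=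
      (((continuous_const.mul continuous_id).sub continuous_const).tendsto 1)
    have h2 : (2 * (1:ℝ) - 1) = 1 := by norm_num
    rw [h2] at h
    exact h.mono_left nhdsWithin_le_nhds
  · filter_upwards [self_mem_nhdsWithin] with s hs
    have : (1:ℝ) < s := hs
    show (1:ℝ) < 2 * s - 1
    linarith

/-- For every real `s > 1` the sphere's spectral zeta series converges, and
`lim_{s→1⁺}(S(s) − 1/(s−1)) = 2γ − 1` where `γ` is the Euler–Mascheroni constant. -/
theorem sphere_zeta_regularized :
    (∀ s : ℝ, 1 < s →
      Summable (fun k : ℕ =>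
        (2 * ((k : ℝ) + 1) + 1) * (((k : ℝ) + 1) * (((k : ℝ) + 1) + 1)) ^ (-s))) ∧
      Tendsto (fun s : ℝ => S s - 1 / (s - 1)) (𝓝[>] 1)
        (𝓝 (2 * Real.eulerMascheroniConstant - 1)) := by
  constructor
  · exact fun s hs => summable_term hs
  · have L1 := zeta_real_limit.comp tendsto_two_mul_sub_one
    have L2 := tendsto_tsum_aterm
    have comb := (L1.const_mul 2).add L2
    have hval : 2 * Real.eulerMascheroniConstant + (-1)
        = 2 * Real.eulerMascheroniConstant - 1 := by ring
    rw [hval] at comb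
    apply comb.congr'
    filter_upwards [self_mem_nhdsWithin] with s hs
    have hs1 : (1:ℝ) < s := hs
    have hsne : s - 1 ≠ 0 := by intro h; apply absurd hs1; linarith [sub_eq_zero.mp h]
    have hf := summable_term hs1
    have hz : Summable (fun n : ℕ => ((n:ℝ)+1) ^ (-(2*s-1))) :=
      summable_shift (2*s-1) (by linarith)
    have hg : Summable (fun k : ℕ => 2 * ((k:ℝ)+1) ^ (-(2*s-1))) := hz.mul_left 2
    have hsplit : ∑' k, aterm s k
        = S s - 2 * ∑' n : ℕ, ((n:ℝ)+1) ^ (-(2*s-1)) := by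
      have h1 : (fun k : ℕ => aterm s k)
          = fun k : ℕ => (2 * ((k : ℝ) + 1) + 1) * (((k : ℝ) + 1) * (((k : ℝ) + 1) + 1)) ^ (-s)
              - 2 * ((k:ℝ)+1) ^ (-(2*s-1)) := rfl
      rw [h1, Summable.tsum_sub hf hg, tsum_mul_left]
      rfl
    simp only [Function.comp_apply]
    rw [hsplit]
    have h2 : (1:ℝ) / (2*s-1-1) = 1 / (2*(s-1)) := by ring_nf
    rw [h2]
    field_simp
    ring
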